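/- The matrix h = (e^{-|q_i - q_j|})_{i,j=1,...,n} is positive definite whenever the real numbers q_1, ..., q_n are pairwise distinct. -/

import Mathlib

open Finset

private lemma telescope_aux (n : ℕ) (f : ℕ → ℝ) (hf0 : f 0 = 0) (j : Fin n) :
    ∑ k : Fin n, (if (k : ℕ) ≤ (j : ℕ) then f ((k : ℕ) + 1) - f (k : ℕ) else 0)
      = f ((j : ℕ) + 1) := by
  rw [Fin.sum_univ_eq_sum_range (fun k => if k ≤ (j : ℕ) then f (k + 1) - f k else 0) n]
  rw [← Finset.sum_subset (Finset.range_subset_range.2 (show (j : ℕ) + 1 ≤ n from j.2))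
    (fun x _ hx => by
      rw [Finset.mem_range, not_lt] at hx
      rw [if_neg (by omega)])]
  have h1 : (∑ x ∈ Finset.range ((j : ℕ) + 1), if x ≤ (j : ℕ) then f (x + 1) - f x else 0)
      = ∑ x ∈ Finset.range ((j : ℕ) + 1), (f (x + 1) - f x) :=
    Finset.sum_congr rfl fun x hx => by
      rw [Finset.mem_range] at hx
      rw [if_pos (by omega)]
  rw [h1, Finset.sum_range_sub f ((j : ℕ) + 1), hf0, sub_zero]

private lemma posdef_sorted (n : ℕ) (p : Fin n → ℝ) (hp : StrictMono p) :
    (Matrix.of fun i j : Fin n => Real.exp (-|p i - p j|)).PosDef := by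
  classical
  set f : ℕ → ℝ := fun k => if h : 0 < k ∧ k ≤ n then Real.exp (2 * p ⟨k - 1, by omega⟩) else 0
    with hfdef
  have hf0 : f 0 = 0 := by simp [hfdef]
  have hfs : ∀ j : Fin n, f ((j : ℕ) + 1) = Real.exp (2 * p j) := by
    intro j
    have h : 0 < (j : ℕ) + 1 ∧ (j : ℕ) + 1 ≤ n := ⟨Nat.succ_pos _, j.2⟩
    simp only [hfdef, dif_pos h, Nat.add_sub_cancel]
  have hlt : ∀ k : Fin n, f (k : ℕ) < f ((k : ℕ) + 1) := by
    intro k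
    rw [hfs k]
    rcases Nat.eq_zero_or_pos (k : ℕ) with h0 | h0
    · rw [h0, hf0]; exact Real.exp_pos _
    · have h : 0 < (k : ℕ) ∧ (k : ℕ) ≤ n := ⟨h0, le_of_lt k.2⟩
      simp only [hfdef, dif_pos h]
      apply Real.exp_lt_exp.2
      have : p ⟨(k : ℕ) - 1, by omega⟩ < p k := hp (by simp [Fin.lt_def]; omega)
      linarith
  set c : Fin n → ℝ := fun k => Real.sqrt (f ((k : ℕ) + 1) - f (k : ℕ)) with hcdef
  have hc2 : ∀ k : Fin n, c k ^ 2 = f ((k : ℕ) + 1) - f (k : ℕ) := fun k =>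
    Real.sq_sqrt (by linarith [hlt k])
  have hcpos : ∀ k : Fin n, 0 < c k := fun k => Real.sqrt_pos.2 (by linarith [hlt k])
  set C : Fin n → Fin n → ℝ :=
    fun i k => (if (k : ℕ) ≤ (i : ℕ) then c k else 0) * Real.exp (-p i) with hCdef
  -- Gram identity
  have gram : ∀ i j : Fin n, ∑ k : Fin n, C i k * C j k = Real.exp (-|p i - p j|) := by
    have key : ∀ i j : Fin n, (j : ℕ) ≤ (i : ℕ) →
        ∑ k : Fin n, C i k * C j k = Real.exp (-|p i - p j|) := by
      intro i j hji
      have hsum : ∑ k : Fin n, (if (k : ℕ) ≤ (j : ℕ) then c k ^ 2 else 0)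
          = Real.exp (2 * p j) := by
        rw [Finset.sum_congr rfl (fun k _ => by rw [hc2 k]), telescope_aux n f hf0 j, hfs j]
      have step : ∀ k : Fin n, C i k * C j k
          = (if (k : ℕ) ≤ (j : ℕ) then c k ^ 2 else 0) * (Real.exp (-p i) * Real.exp (-p j)) := by
        intro k
        simp only [hCdef]
        rcases le_or_gt (k : ℕ) (j : ℕ) with h2 | h2
        · rw [if_pos h2, if_pos (le_trans h2 hji), if_pos h2]; ring
        · rw [if_neg (not_le.2 h2), if_neg (not_le.2 h2)]; ring
      rw [Finset.sum_congr rfl (fun k _ => step k), ← Finset.sum_mul, hsum,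
        ← Real.exp_add, ← Real.exp_add]
      have hle : p j ≤ p i := hp.monotone (show j ≤ i from by exact_mod_cast hji)
      rw [abs_of_nonneg (by linarith), Real.exp_eq_exp]
      ring
    intro i j
    rcases le_total (j : ℕ) (i : ℕ) with h | h
    · exact key i j h
    · rw [Finset.sum_congr rfl (fun k _ => mul_comm (C i k) (C j k)), key j i h, abs_sub_comm]
  rw [Matrix.posDef_iff_dotProduct_mulVec]
  constructor
  · ext i j
    simp [Matrix.conjTranspose_apply, abs_sub_comm]
  · intro x hx
    have expand : dotProduct (star x)
        ((Matrix.of fun i j : Fin n => Real.exp (-|p i - p j|)).mulVec x)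
        = ∑ k : Fin n, (∑ i : Fin n, x i * C i k) ^ 2 := by
      simp only [dotProduct, Matrix.mulVec, Matrix.of_apply, Pi.star_apply,
        star_trivial]
      calc ∑ i : Fin n, x i * ∑ j : Fin n, Real.exp (-|p i - p j|) * x j
          = ∑ i : Fin n, ∑ j : Fin n, ∑ k : Fin n, (x i * C i k) * (x j * C j k) := by
            refine Finset.sum_congr rfl fun i _ => ?_
            rw [Finset.mul_sum]
            refine Finset.sum_congr rfl fun j _ => ?_
            rw [← gram i j, Finset.sum_mul, Finset.mul_sum]
            exact Finset.sum_congr rfl fun k _ => by ring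
        _ = ∑ i : Fin n, ∑ k : Fin n, ∑ j : Fin n, (x i * C i k) * (x j * C j k) :=
            Finset.sum_congr rfl fun i _ => Finset.sum_comm
        _ = ∑ k : Fin n, ∑ i : Fin n, ∑ j : Fin n, (x i * C i k) * (x j * C j k) :=
            Finset.sum_comm
        _ = ∑ k : Fin n, (∑ i : Fin n, x i * C i k) ^ 2 := by
            refine Finset.sum_congr rfl fun k _ => ?_
            rw [sq, Finset.sum_mul_sum]
    rw [expand]
    have hnonneg : ∀ k ∈ Finset.univ, (0:ℝ) ≤ (∑ i : Fin n, x i * C i k) ^ 2 :=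
      fun k _ => sq_nonneg _
    rcases (Finset.sum_nonneg hnonneg).lt_or_eq with h | h
    · exact h
    · exfalso
      have hzero : ∀ k : Fin n, ∑ i : Fin n, x i * C i k = 0 := by
        intro k
        have h0 := (Finset.sum_eq_zero_iff_of_nonneg hnonneg).1 h.symm k (Finset.mem_univ k)
        exact pow_eq_zero_iff two_ne_zero |>.1 h0
      have hTzero : ∀ m : ℕ,
          ∑ i : Fin n, (if m ≤ (i : ℕ) then x i * Real.exp (-p i) else 0) = 0 := by
        intro m
        by_cases hm : m < n
        · have h0 := hzero ⟨m, hm⟩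
          have heq : ∑ i : Fin n, x i * C i ⟨m, hm⟩
              = c ⟨m, hm⟩ * ∑ i : Fin n, (if m ≤ (i : ℕ) then x i * Real.exp (-p i) else 0) := by
            rw [Finset.mul_sum]
            refine Finset.sum_congr rfl fun i _ => ?_
            simp only [hCdef]
            split_ifs <;> ring
          rw [heq] at h0
          exact (mul_eq_zero.1 h0).resolve_left (ne_of_gt (hcpos _))
        · apply Finset.sum_eq_zero
          intro i _
          rw [if_neg (by have := i.isLt; omega)]
      apply hx
      funext j
      show x j = 0
      have hdiff : ∀ i : Fin n,
          (if (j : ℕ) ≤ (i : ℕ) then x i * Real.exp (-p i) else 0)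
            - (if (j : ℕ) + 1 ≤ (i : ℕ) then x i * Real.exp (-p i) else 0)
          = if i = j then x i * Real.exp (-p i) else 0 := by
        intro i
        rcases eq_or_ne i j with rfl | hne
        · rw [if_pos le_rfl, if_neg (by omega), if_pos rfl, sub_zero]
        · have hne' : (j : ℕ) ≠ (i : ℕ) := fun hh => hne (Fin.ext hh.symm)
          rw [if_neg hne]
          rcases lt_or_gt_of_ne hne' with hlt' | hlt'
          · rw [if_pos (by omega), if_pos (by omega), sub_self]
          · rw [if_neg (by omega), if_neg (by omega), sub_self]
      have h1 : x j * Real.exp (-p j) = 0 := by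
        have := congrArg₂ (· - ·) (hTzero (j : ℕ)) (hTzero ((j : ℕ) + 1))
        simp only [sub_zero] at this
        rw [← Finset.sum_sub_distrib, Finset.sum_congr rfl (fun i _ => hdiff i)] at this
        simpa using this
      exact (mul_eq_zero.1 h1).resolve_right (Real.exp_ne_zero _)

/-- The matrix `h = (exp (-|q i - q j|))` is positive definite whenever the
real numbers `q 1, …, q n` are pairwise distinct. -/
theorem stmt_0 (n : ℕ) (q : Fin n → ℝ)
    (hq : ∀ i j : Fin n, i ≠ j → q i ≠ q j) :
    (Matrix.of fun i j : Fin n => Real.exp (-|q i - q j|)).PosDef := by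
  classical
  have hinj : Function.Injective q := fun i j hij =>
    by_contra fun hne => hq i j hne hij
  set σ := Tuple.sort q with hσ
  have hmono : Monotone (q ∘ σ) := Tuple.monotone_sort q
  have hps : StrictMono (q ∘ σ) :=
    hmono.strictMono_of_injective (hinj.comp σ.injective)
  have hpd := posdef_sorted n (q ∘ σ) hps
  rw [Matrix.posDef_iff_dotProduct_mulVec]
  constructor
  · ext i j
    simp [Matrix.conjTranspose_apply, abs_sub_comm]
  · intro x hx
    have hy : (fun i => x (σ i)) ≠ 0 := by
      intro h0
      apply hx
      funext i
      have := congrFun h0 (σ.symm i)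
      simpa using this
    have hpos := (Matrix.posDef_iff_dotProduct_mulVec.mp hpd).2 (x := fun i => x (σ i)) hy
    have key : dotProduct (star fun i => x (σ i))
        ((Matrix.of fun i j : Fin n => Real.exp (-|(q ∘ σ) i - (q ∘ σ) j|)).mulVec
          fun i => x (σ i))
        = dotProduct (star x)
        ((Matrix.of fun i j : Fin n => Real.exp (-|q i - q j|)).mulVec x) := by
      simp only [dotProduct, Matrix.mulVec, Matrix.of_apply, Pi.star_apply,
        star_trivial, Function.comp_apply]
      rw [← Equiv.sum_comp σ (fun i => x i * ∑ j, Real.exp (-|q i - q j|) * x j)]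
      refine Finset.sum_congr rfl fun i _ => ?_
      congr 1
      rw [← Equiv.sum_comp σ (fun j => Real.exp (-|q (σ i) - q j|) * x j)]
    rw [← key]
    exact hpos
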